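/- Let d ≥ 2, let F ⊆ ℝ^{d-1} be a compact convex set with (d-1)-dimensional Lebesgue measure 1, and let K ⊆ ℝ^d be a compact convex set with floor F and Vol_d(K) = 1. Let L_K(t) be the (d-1)-dimensional Lebesgue measure of K ∩ (ℝ^{d-1} × {t}). Then for every t ∈ [0, d], the volume of K below level t dominates that of a unit mountain: ∫_0^t L_K(s) ds ≥ 1 − (1 − t/d)^d. -/

import Mathlib

open MeasureTheory Set Bornology
open scoped Pointwise ENNReal

noncomputable section

/-- The floor `F ⊆ ℝ^m` embedded into `ℝ^{m+1}` at height `0`, i.e. `F × {0}`. -/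
def floorEmb (m : ℕ) (F : Set (Fin m → ℝ)) : Set (Fin (m + 1) → ℝ) :=
  (fun z => Fin.snoc z (0 : ℝ)) '' F

/-- `K ⊆ ℝ^{m+1}` has floor `F ⊆ ℝ^m`: it lies in the upper half-space and its
intersection with the hyperplane `x_{last} = 0` is `F × {0}`. -/
def HasFloor (m : ℕ) (F : Set (Fin m → ℝ)) (K : Set (Fin (m + 1) → ℝ)) : Prop :=
  K ⊆ {x | 0 ≤ x (Fin.last m)} ∧ K ∩ {x | x (Fin.last m) = 0} = floorEmb m F

/-- `Q_K(2)`: the probability that two independent uniform points `U₁, U₂` of `K`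
both lie on the boundary of the convex hull of `{U₁, U₂} ∪ (F × {0})`. -/
def Qtwo (m : ℕ) (F : Set (Fin m → ℝ)) (K : Set (Fin (m + 1) → ℝ)) : ℝ :=
  (((volume.restrict K).prod (volume.restrict K))
    {p : (Fin (m + 1) → ℝ) × (Fin (m + 1) → ℝ) |
      p.1 ∈ frontier (convexHull ℝ ({p.1, p.2} ∪ floorEmb m F)) ∧
      p.2 ∈ frontier (convexHull ℝ ({p.1, p.2} ∪ floorEmb m F))}).toReal

/-- `L_K(t)`: the `m`-dimensional Lebesgue measure of the horizontal slice of `K`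
at height `t`. -/
def layerVol (m : ℕ) (K : Set (Fin (m + 1) → ℝ)) (t : ℝ) : ℝ :=
  (volume {z : Fin m → ℝ | Fin.snoc z t ∈ K}).toReal




/-- slice of a set at height s -/
def slc (n : ℕ) (S : Set (Fin (n + 1) → ℝ)) (s : ℝ) : Set (Fin n → ℝ) :=
  {z | Fin.snoc z s ∈ S}

lemma snoc_combo (n : ℕ) (a b : ℝ) (u v : Fin n → ℝ) (x y : ℝ) :
    (Fin.snoc (a • u + b • v) (a * x + b * y) : Fin (n+1) → ℝ)
      = a • (Fin.snoc u x : Fin (n+1) → ℝ) + b • (Fin.snoc v y : Fin (n+1) → ℝ) := by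
  funext j
  refine Fin.lastCases ?_ (fun i => ?_) j <;>
    simp [Fin.snoc_last, Fin.snoc_castSucc, smul_eq_mul]

/-- the measurable equiv used for slicing -/
def sliceEquiv (n : ℕ) : (Fin (n + 1) → ℝ) ≃ᵐ ℝ × (Fin n → ℝ) :=
  MeasurableEquiv.piFinSuccAbove (fun _ => ℝ) (Fin.last n)

lemma sliceEquiv_symm_apply (n : ℕ) (p : ℝ × (Fin n → ℝ)) :
    (sliceEquiv n).symm p = Fin.snoc p.2 p.1 := by
  rw [show (Fin.snoc p.2 p.1 : Fin (n+1) → ℝ) = Fin.insertNth (Fin.last n) p.1 p.2 by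
    simp [Fin.insertNth_last']
  ]
  rfl

lemma vol_eq_lintegral_slc (n : ℕ) (S : Set (Fin (n + 1) → ℝ)) (hS : MeasurableSet S) :
    volume S = ∫⁻ s, volume (slc n S s) := by
  have hmp := (volume_preserving_piFinSuccAbove (fun _ : Fin (n+1) => ℝ) (Fin.last n)).symm
  have h1 : volume S = (volume : Measure (ℝ × (Fin n → ℝ))) ((sliceEquiv n).symm ⁻¹' S) := by
    rw [← hmp.measure_preimage hS.nullMeasurableSet]
    rfl
  rw [h1]
  have h2 : ((sliceEquiv n).symm ⁻¹' S) = {p : ℝ × (Fin n → ℝ) | Fin.snoc p.2 p.1 ∈ S} := by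
    ext p; simp [sliceEquiv_symm_apply]
  rw [h2]
  have h3 : MeasurableSet {p : ℝ × (Fin n → ℝ) | Fin.snoc p.2 p.1 ∈ S} := by
    rw [← h2]; exact (sliceEquiv n).symm.measurable hS
  rw [show (volume : Measure (ℝ × (Fin n → ℝ))) = (volume : Measure ℝ).prod volume from rfl]
  rw [Measure.prod_apply h3]
  rfl

lemma measurable_vol_slc (n : ℕ) (S : Set (Fin (n + 1) → ℝ)) (hS : MeasurableSet S) :
    Measurable (fun s => volume (slc n S s)) := by
  have h3 : MeasurableSet {p : ℝ × (Fin n → ℝ) | Fin.snoc p.2 p.1 ∈ S} := by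
    have : {p : ℝ × (Fin n → ℝ) | Fin.snoc p.2 p.1 ∈ S} = ((sliceEquiv n).symm ⁻¹' S) := by
      ext p; simp [sliceEquiv_symm_apply]
    rw [this]; exact (sliceEquiv n).symm.measurable hS
  exact measurable_measure_prodMk_left h3




lemma slc_convex (n : ℕ) {S : Set (Fin (n + 1) → ℝ)} (hS : Convex ℝ S) (s : ℝ) :
    Convex ℝ (slc n S s) := by
  intro u hu v hv a b ha hb hab
  have h : (Fin.snoc (a • u + b • v) (a * s + b * s) : Fin (n+1) → ℝ)
      = a • (Fin.snoc u s : Fin (n+1) → ℝ) + b • (Fin.snoc v s : Fin (n+1) → ℝ) := by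
    funext j
    refine Fin.lastCases ?_ (fun i => ?_) j <;>
      simp [Fin.snoc_last, Fin.snoc_castSucc, smul_eq_mul]
  have : a * s + b * s = s := by rw [← add_mul, hab, one_mul]
  simp only [slc, mem_setOf_eq] at hu hv ⊢
  have key : (Fin.snoc (a • u + b • v) s : Fin (n+1) → ℝ)
      = a • (Fin.snoc u s : Fin (n+1) → ℝ) + b • (Fin.snoc v s : Fin (n+1) → ℝ) := by
    rw [← h]; congr 1; rw [← add_mul, hab, one_mul]
  rw [key]
  exact hS hu hv ha hb hab

lemma slc_compact (n : ℕ) {S : Set (Fin (n + 1) → ℝ)} (hS : IsCompact S) (s : ℝ) :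
    IsCompact (slc n S s) := by
  have hcont : Continuous (fun z : Fin n → ℝ => (Fin.snoc z s : Fin (n+1) → ℝ)) := by
    apply continuous_pi
    intro j
    refine Fin.lastCases ?_ (fun i => ?_) j
    · simpa [Fin.snoc_last] using continuous_const
    · simpa [Fin.snoc_castSucc] using continuous_apply i
  have hclosed : IsClosed (slc n S s) := IsClosed.preimage hcont hS.isClosed
  have hbdd : Bornology.IsBounded (slc n S s) := by
    obtain ⟨R, hR⟩ := hS.isBounded.subset_closedBall 0
    apply Bornology.IsBounded.subset (Metric.isBounded_closedBall (x := (0 : Fin n → ℝ)) (r := R))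
    intro z hz
    have h1 : (Fin.snoc z s : Fin (n+1) → ℝ) ∈ Metric.closedBall 0 R := hR hz
    simp only [Metric.mem_closedBall, dist_zero_right] at h1 ⊢
    have : ∀ i : Fin n, |z i| ≤ R := by
      intro i
      calc |z i| = |(Fin.snoc z s : Fin (n+1) → ℝ) i.castSucc| := by rw [Fin.snoc_castSucc]
        _ ≤ ‖(Fin.snoc z s : Fin (n+1) → ℝ)‖ := by
            simpa [Real.norm_eq_abs] using norm_le_pi_norm (Fin.snoc z s : Fin (n+1) → ℝ) i.castSucc
        _ ≤ R := h1
    rcases isEmpty_or_nonempty (Fin n) with h | h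
    · have hz0 : z = 0 := Subsingleton.elim z 0
      have : (0:ℝ) ≤ R := le_trans (norm_nonneg _) h1
      simpa [hz0] using this
    · exact (pi_norm_le_iff_of_nonempty (f := z) (r := R)).2 (fun i => by
        simpa [Real.norm_eq_abs] using this i)
  exact Metric.isCompact_of_isClosed_isBounded hclosed hbdd



lemma Ioo_add_Ioo_subset' (a b c d : ℝ) (hab : a < b) (hcd : c < d) :
    Ioo (a + c) (b + d) ⊆ Ioo a b + Ioo c d := by
  intro x hx
  obtain ⟨h1, h2⟩ := hx
  have h5 : max c (x - b) < min d (x - a) :=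
    max_lt (lt_min hcd (by linarith)) (lt_min (by linarith) (by linarith))
  set v := (max c (x - b) + min d (x - a)) / 2 with hv
  have hv1 : max c (x - b) < v := by simp only [hv]; linarith
  have hv2 : v < min d (x - a) := by simp only [hv]; linarith
  have hc : c < v := lt_of_le_of_lt (le_max_left _ _) hv1
  have hd : v < d := lt_of_lt_of_le hv2 (min_le_left _ _)
  have hxb : x - b < v := lt_of_le_of_lt (le_max_right _ _) hv1
  have hxa : v < x - a := lt_of_lt_of_le hv2 (min_le_right _ _)
  exact ⟨x - v, ⟨by linarith, by linarith⟩, v, ⟨hc, hd⟩, by ring⟩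

/-- bounded nonempty convex subset of ℝ has volume = sSup - sInf -/
lemma vol_convex_real {S : Set ℝ} (hne : S.Nonempty) (hconv : Convex ℝ S)
    (hbdd : IsBounded S) : volume S = ENNReal.ofReal (sSup S - sInf S) := by
  have hba : BddAbove S := hbdd.bddAbove
  have hbb : BddBelow S := hbdd.bddBelow
  apply le_antisymm
  · calc volume S ≤ volume (Icc (sInf S) (sSup S)) := by
          apply measure_mono
          intro x hx
          exact ⟨csInf_le hbb hx, le_csSup hba hx⟩
      _ = ENNReal.ofReal (sSup S - sInf S) := Real.volume_Icc
  · calc ENNReal.ofReal (sSup S - sInf S) = volume (Ioo (sInf S) (sSup S)) :=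
          Real.volume_Ioo.symm
      _ ≤ volume S := by
          apply measure_mono
          intro x hx
          obtain ⟨s₁, hs₁, hs₁x⟩ := exists_lt_of_csInf_lt hne hx.1
          obtain ⟨s₂, hs₂, hs₂x⟩ := exists_lt_of_lt_csSup hne hx.2
          exact hconv.ordConnected.out hs₁ hs₂ ⟨le_of_lt hs₁x, le_of_lt hs₂x⟩

/-- 1-D Brunn-Minkowski for convex sets -/
lemma oneDim_BM {S T : Set ℝ} (hSne : S.Nonempty) (hTne : T.Nonempty)
    (hSconv : Convex ℝ S) (hTconv : Convex ℝ T) (hSb : IsBounded S) (hTb : IsBounded T)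
    {c d : ℝ} (hc : 0 < c) (hd : 0 < d) :
    ENNReal.ofReal c * volume S + ENNReal.ofReal d * volume T ≤ volume (c • S + d • T) := by
  set pS := sInf S; set qS := sSup S; set pT := sInf T; set qT := sSup T
  have hpq : pS ≤ qS := Real.sInf_le_sSup _ hSb.bddBelow hSb.bddAbove |>.trans_eq rfl
  have hpqT : pT ≤ qT := Real.sInf_le_sSup _ hTb.bddBelow hTb.bddAbove
  have hvolS : volume S = ENNReal.ofReal (qS - pS) := vol_convex_real hSne hSconv hSb
  have hvolT : volume T = ENNReal.ofReal (qT - pT) := vol_convex_real hTne hTconv hTb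
  have hsmulvol : ∀ (r : ℝ), 0 < r → ∀ (U : Set ℝ), volume (r • U) = ENNReal.ofReal r * volume U := by
    intro r hr U
    rw [Measure.addHaar_smul volume r U]
    simp [abs_of_pos hr]
  have htrans : ∀ (x : ℝ) (U : Set ℝ), volume (x +ᵥ U) = volume U := fun x U => by
    simpa using measure_vadd x volume U
  rcases eq_or_lt_of_le hpq with h | h
  · -- S degenerate
    obtain ⟨s₀, hs₀⟩ := hSne
    have hsub : (c * s₀) +ᵥ (d • T) ⊆ c • S + d • T := by
      intro x hx
      obtain ⟨y, hy, rfl⟩ := hx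
      exact Set.add_mem_add (Set.smul_mem_smul_set hs₀) hy
    calc ENNReal.ofReal c * volume S + ENNReal.ofReal d * volume T
        = ENNReal.ofReal d * volume T := by
          rw [hvolS, ← h]; simp
      _ = volume ((c * s₀) +ᵥ (d • T)) := by rw [htrans, hsmulvol d hd]
      _ ≤ volume (c • S + d • T) := measure_mono hsub
  rcases eq_or_lt_of_le hpqT with h' | h'
  · -- T degenerate
    obtain ⟨t₀, ht₀⟩ := hTne
    have hsub : (d * t₀) +ᵥ (c • S) ⊆ c • S + d • T := by
      intro x hx
      obtain ⟨y, hy, rfl⟩ := hx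
      have : (fun x => d * t₀ +ᵥ x) y = y + d * t₀ := by simp [vadd_eq_add]; ring
      rw [this]
      exact Set.add_mem_add hy (Set.smul_mem_smul_set ht₀)
    calc ENNReal.ofReal c * volume S + ENNReal.ofReal d * volume T
        = ENNReal.ofReal c * volume S := by
          rw [hvolT, ← h']; simp
      _ = volume ((d * t₀) +ᵥ (c • S)) := by rw [htrans, hsmulvol c hc]
      _ ≤ volume (c • S + d • T) := measure_mono hsub
  have key : Ioo (c * pS + d * pT) (c * qS + d * qT) ⊆ c • S + d • T := by
    calc Ioo (c * pS + d * pT) (c * qS + d * qT)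
        ⊆ Ioo (c * pS) (c * qS) + Ioo (d * pT) (d * qT) :=
          Ioo_add_Ioo_subset' _ _ _ _ (by nlinarith) (by nlinarith)
      _ = c • Ioo pS qS + d • Ioo pT qT := by
          rw [LinearOrderedField.smul_Ioo hc, LinearOrderedField.smul_Ioo hd]
      _ ⊆ c • S + d • T := by
          apply Set.add_subset_add
          · apply smul_set_mono
            intro x hx
            obtain ⟨s₁, hs₁, hs₁x⟩ := exists_lt_of_csInf_lt hSne hx.1
            obtain ⟨s₂, hs₂, hs₂x⟩ := exists_lt_of_lt_csSup hSne hx.2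
            exact hSconv.ordConnected.out hs₁ hs₂ ⟨le_of_lt hs₁x, le_of_lt hs₂x⟩
          · apply smul_set_mono
            intro x hx
            obtain ⟨s₁, hs₁, hs₁x⟩ := exists_lt_of_csInf_lt hTne hx.1
            obtain ⟨s₂, hs₂, hs₂x⟩ := exists_lt_of_lt_csSup hTne hx.2
            exact hTconv.ordConnected.out hs₁ hs₂ ⟨le_of_lt hs₁x, le_of_lt hs₂x⟩
  calc ENNReal.ofReal c * volume S + ENNReal.ofReal d * volume T
      = ENNReal.ofReal (c * (qS - pS)) + ENNReal.ofReal (d * (qT - pT)) := by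
        rw [hvolS, hvolT, ENNReal.ofReal_mul hc.le, ENNReal.ofReal_mul hd.le]
    _ = ENNReal.ofReal (c * (qS - pS) + d * (qT - pT)) := by
        rw [ENNReal.ofReal_add (by nlinarith) (by nlinarith)]
    _ = volume (Ioo (c * pS + d * pT) (c * qS + d * qT)) := by
        rw [Real.volume_Ioo]; ring_nf
    _ ≤ volume (c • S + d • T) := measure_mono key




/-- one-dimensional multiplicative Prékopa–Leindler for quasiconcave data -/
lemma oneDim_PL (lam : ℝ) (hl0 : 0 < lam) (hl1 : lam < 1)
    (φ ψ χ : ℝ → ℝ)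
    (hφm : Measurable φ) (hψm : Measurable ψ) (hχm : Measurable χ)
    (hφ0 : ∀ s, 0 ≤ φ s) (hψ0 : ∀ s, 0 ≤ ψ s) (hχ0 : ∀ s, 0 ≤ χ s)
    (hφi : Integrable φ) (hψi : Integrable ψ) (hχi : Integrable χ)
    (MA MB : ℝ) (hMA : 0 < MA) (hMB : 0 < MB)
    (hφle : ∀ s, φ s ≤ MA) (hψle : ∀ s, ψ s ≤ MB)
    (hφsup : ∀ u, 0 < u → u < MA → ∃ a, u < φ a)
    (hψsup : ∀ u, 0 < u → u < MB → ∃ b, u < ψ b)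
    (hφqc : ∀ u, 0 < u → Convex ℝ {a | u < φ a})
    (hψqc : ∀ u, 0 < u → Convex ℝ {b | u < ψ b})
    (hφbd : ∀ u, 0 < u → IsBounded {a | u < φ a})
    (hψbd : ∀ u, 0 < u → IsBounded {b | u < ψ b})
    (hkey : ∀ a b, 0 < φ a → 0 < ψ b →
      (φ a) ^ (1 - lam) * (ψ b) ^ lam ≤ χ ((1 - lam) * a + lam * b)) :
    (∫ s, φ s) ^ (1 - lam) * (∫ s, ψ s) ^ lam ≤ ∫ s, χ s := by
  have hl1' : 0 < 1 - lam := by linarith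
  set M : ℝ := MA ^ (1 - lam) * MB ^ lam with hM
  have hMpos : 0 < M := mul_pos (Real.rpow_pos_of_pos hMA _) (Real.rpow_pos_of_pos hMB _)
  -- the scaled superlevel-volume functions
  set Vφ : ℝ → ℝ≥0∞ := fun θ => volume {a | θ * (MA / M) < φ a} with hVφ
  set Vψ : ℝ → ℝ≥0∞ := fun θ => volume {b | θ * (MB / M) < ψ b} with hVψ
  set Vχ : ℝ → ℝ≥0∞ := fun θ => volume {x | θ < χ x} with hVχ
  have hVφ_anti : Antitone Vφ := by
    intro θ₁ θ₂ h
    apply measure_mono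
    intro a ha
    exact lt_of_le_of_lt (mul_le_mul_of_nonneg_right h (div_nonneg hMA.le hMpos.le)) ha
  have hVψ_anti : Antitone Vψ := by
    intro θ₁ θ₂ h
    apply measure_mono
    intro a ha
    exact lt_of_le_of_lt (mul_le_mul_of_nonneg_right h (div_nonneg hMB.le hMpos.le)) ha
  -- pointwise superlevel inequality on Ioo 0 M
  have hpt : ∀ θ ∈ Ioo (0:ℝ) M,
      ENNReal.ofReal (1 - lam) * Vφ θ + ENNReal.ofReal lam * Vψ θ ≤ Vχ θ := by
    intro θ hθ
    obtain ⟨hθ0, hθM⟩ := hθ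
    set u : ℝ := θ * (MA / M) with hu
    set v : ℝ := θ * (MB / M) with hv
    have hu0 : 0 < u := mul_pos hθ0 (div_pos hMA hMpos)
    have hv0 : 0 < v := mul_pos hθ0 (div_pos hMB hMpos)
    have huM : u < MA := by
      rw [hu]
      calc θ * (MA / M) < M * (MA / M) := mul_lt_mul_of_pos_right hθM (div_pos hMA hMpos)
        _ = MA := by field_simp
    have hvM : v < MB := by
      rw [hv]
      calc θ * (MB / M) < M * (MB / M) := mul_lt_mul_of_pos_right hθM (div_pos hMB hMpos)
        _ = MB := by field_simp
    set Sφ := {a | u < φ a}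
    set Sψ := {b | v < ψ b}
    have hSφne : Sφ.Nonempty := hφsup u hu0 huM
    have hSψne : Sψ.Nonempty := hψsup v hv0 hvM
    have hsub : (1 - lam) • Sφ + lam • Sψ ⊆ {x | θ < χ x} := by
      intro x hx
      obtain ⟨y, hy, z, hz, rfl⟩ := hx
      obtain ⟨a, ha, rfl⟩ := hy
      obtain ⟨b, hb, rfl⟩ := hz
      have ha' : u < φ a := ha
      have hb' : v < ψ b := hb
      have h1 : u ^ (1 - lam) * v ^ lam < (φ a) ^ (1 - lam) * (ψ b) ^ lam := by
        apply mul_lt_mul'' _ _ (Real.rpow_nonneg hu0.le _) (Real.rpow_nonneg hv0.le _)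
        · exact Real.rpow_lt_rpow hu0.le ha' hl1'
        · exact Real.rpow_lt_rpow hv0.le hb' hl0
      have hθθ : θ ^ (1 - lam) * θ ^ lam = θ := by
        rw [← Real.rpow_add hθ0]; simp
      have hMM : M ^ (1 - lam) * M ^ lam = M := by
        rw [← Real.rpow_add hMpos]; simp
      have h2 : u ^ (1 - lam) * v ^ lam = θ := by
        rw [hu, hv, Real.mul_rpow hθ0.le (div_nonneg hMA.le hMpos.le),
          Real.mul_rpow hθ0.le (div_nonneg hMB.le hMpos.le)]
        calc θ ^ (1-lam) * (MA / M) ^ (1-lam) * (θ ^ lam * (MB / M) ^ lam)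
            = (θ ^ (1-lam) * θ ^ lam) * ((MA / M) ^ (1-lam) * (MB / M) ^ lam) := by ring
          _ = θ * ((MA ^ (1-lam) * MB ^ lam) / (M ^ (1-lam) * M ^ lam)) := by
              rw [hθθ, Real.div_rpow hMA.le hMpos.le, Real.div_rpow hMB.le hMpos.le]; ring
          _ = θ * (M / M) := by rw [hMM, ← hM]
          _ = θ := by rw [div_self hMpos.ne']; ring
      have h3 : θ < χ ((1 - lam) * a + lam * b) := by
        calc θ = u ^ (1 - lam) * v ^ lam := h2.symm
          _ < (φ a) ^ (1 - lam) * (ψ b) ^ lam := h1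
          _ ≤ χ ((1 - lam) * a + lam * b) := hkey a b (lt_trans hu0 ha') (lt_trans hv0 hb')
      simpa [smul_eq_mul] using h3
    calc ENNReal.ofReal (1 - lam) * Vφ θ + ENNReal.ofReal lam * Vψ θ
        ≤ volume ((1 - lam) • Sφ + lam • Sψ) :=
          oneDim_BM hSφne hSψne (hφqc u hu0) (hψqc v hv0) (hφbd u hu0) (hψbd v hv0) hl1' hl0
      _ ≤ Vχ θ := measure_mono hsub
  -- measurability of V functions
  have hVχ_anti : Antitone Vχ := by
    intro θ₁ θ₂ h
    apply measure_mono
    intro a ha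
    exact lt_of_le_of_lt h ha
  set Iφ : ℝ := ∫ s, φ s with hIφ
  set Iψ : ℝ := ∫ s, ψ s with hIψ
  set Iχ : ℝ := ∫ s, χ s with hIχ
  have hIφ0 : 0 ≤ Iφ := integral_nonneg hφ0
  have hIψ0 : 0 ≤ Iψ := integral_nonneg hψ0
  have hIχ0 : 0 ≤ Iχ := integral_nonneg hχ0
  -- layer cake for χ
  have lcχ : ENNReal.ofReal Iχ = ∫⁻ θ in Ioi (0:ℝ), Vχ θ := by
    rw [hIχ, ofReal_integral_eq_lintegral_ofReal hχi (ae_of_all _ hχ0)]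
    exact lintegral_eq_lintegral_meas_lt volume (ae_of_all _ hχ0) hχm.aemeasurable
  -- layer cake for the rescaled φ
  have keyiffφ : ∀ (θ a : ℝ), θ * (MA / M) < φ a ↔ θ < (M / MA) * φ a := by
    intro θ a
    rw [show (M / MA) * φ a = φ a / (MA / M) by field_simp]
    exact (lt_div_iff₀ (div_pos hMA hMpos)).symm
  have keyiffψ : ∀ (θ b : ℝ), θ * (MB / M) < ψ b ↔ θ < (M / MB) * ψ b := by
    intro θ b
    rw [show (M / MB) * ψ b = ψ b / (MB / M) by field_simp]
    exact (lt_div_iff₀ (div_pos hMB hMpos)).symm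
  have lcφ : ∫⁻ θ in Ioi (0:ℝ), Vφ θ = ENNReal.ofReal (M / MA) * ENNReal.ofReal Iφ := by
    have h1 : ∀ θ : ℝ, Vφ θ = volume {a | θ < (M / MA) * φ a} := by
      intro θ; rw [hVφ]; exact congrArg volume (by ext a; exact keyiffφ θ a)
    calc ∫⁻ θ in Ioi (0:ℝ), Vφ θ = ∫⁻ θ in Ioi (0:ℝ), volume {a | θ < (M / MA) * φ a} := by
          apply lintegral_congr; intro θ; exact h1 θ
      _ = ∫⁻ a, ENNReal.ofReal ((M / MA) * φ a) := by
          rw [← lintegral_eq_lintegral_meas_lt volume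
            (ae_of_all _ (fun a => mul_nonneg (div_pos hMpos hMA).le (hφ0 a)))
            (hφm.const_mul _).aemeasurable]
      _ = ∫⁻ a, ENNReal.ofReal (M / MA) * ENNReal.ofReal (φ a) := by
          apply lintegral_congr; intro a; exact ENNReal.ofReal_mul (div_pos hMpos hMA).le
      _ = ENNReal.ofReal (M / MA) * ∫⁻ a, ENNReal.ofReal (φ a) :=
          lintegral_const_mul _ hφm.ennreal_ofReal
      _ = ENNReal.ofReal (M / MA) * ENNReal.ofReal Iφ := by
          rw [hIφ, ofReal_integral_eq_lintegral_ofReal hφi (ae_of_all _ hφ0)]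
  have lcψ : ∫⁻ θ in Ioi (0:ℝ), Vψ θ = ENNReal.ofReal (M / MB) * ENNReal.ofReal Iψ := by
    have h1 : ∀ θ : ℝ, Vψ θ = volume {b | θ < (M / MB) * ψ b} := by
      intro θ; rw [hVψ]; exact congrArg volume (by ext b; exact keyiffψ θ b)
    calc ∫⁻ θ in Ioi (0:ℝ), Vψ θ = ∫⁻ θ in Ioi (0:ℝ), volume {b | θ < (M / MB) * ψ b} := by
          apply lintegral_congr; intro θ; exact h1 θ
      _ = ∫⁻ b, ENNReal.ofReal ((M / MB) * ψ b) := by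
          rw [← lintegral_eq_lintegral_meas_lt volume
            (ae_of_all _ (fun b => mul_nonneg (div_pos hMpos hMB).le (hψ0 b)))
            (hψm.const_mul _).aemeasurable]
      _ = ∫⁻ b, ENNReal.ofReal (M / MB) * ENNReal.ofReal (ψ b) := by
          apply lintegral_congr; intro b; exact ENNReal.ofReal_mul (div_pos hMpos hMB).le
      _ = ENNReal.ofReal (M / MB) * ∫⁻ b, ENNReal.ofReal (ψ b) :=
          lintegral_const_mul _ hψm.ennreal_ofReal
      _ = ENNReal.ofReal (M / MB) * ENNReal.ofReal Iψ := by
          rw [hIψ, ofReal_integral_eq_lintegral_ofReal hψi (ae_of_all _ hψ0)]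
  -- restricting the φ, ψ integrals to Ioo 0 M
  have hdecomp : Ioi (0:ℝ) = Ioo 0 M ∪ Ici M := by
    ext x
    simp only [mem_Ioi, mem_union, mem_Ioo, mem_Ici]
    constructor
    · intro h; rcases lt_or_ge x M with h' | h'
      · exact Or.inl ⟨h, h'⟩
      · exact Or.inr h'
    · rintro (⟨h1, _⟩ | h1)
      · exact h1
      · exact lt_of_lt_of_le hMpos h1
  have hdisj : Disjoint (Ioo (0:ℝ) M) (Ici M) := by
    rw [Set.disjoint_left]; intro x hx hx'; exact absurd hx.2 (not_lt.2 hx')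
  have hsplitφ : ∫⁻ θ in Ioi (0:ℝ), Vφ θ = ∫⁻ θ in Ioo (0:ℝ) M, Vφ θ := by
    rw [hdecomp, lintegral_union measurableSet_Ici hdisj]
    have : ∫⁻ θ in Ici M, Vφ θ = ∫⁻ _θ in Ici M, (0:ℝ≥0∞) := by
      apply setLIntegral_congr_fun measurableSet_Ici
      intro θ hθ
      have : {a | θ * (MA / M) < φ a} = ∅ := by
        ext a
        simp only [mem_setOf_eq, mem_empty_iff_false, iff_false, not_lt]
        calc φ a ≤ MA := hφle a
          _ = M * (MA / M) := by field_simp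
          _ ≤ θ * (MA / M) := mul_le_mul_of_nonneg_right hθ (div_pos hMA hMpos).le
      rw [hVφ]; simp only [this, measure_empty]
    rw [this, lintegral_zero, add_zero]
  have hsplitψ : ∫⁻ θ in Ioi (0:ℝ), Vψ θ = ∫⁻ θ in Ioo (0:ℝ) M, Vψ θ := by
    rw [hdecomp, lintegral_union measurableSet_Ici hdisj]
    have : ∫⁻ θ in Ici M, Vψ θ = ∫⁻ _θ in Ici M, (0:ℝ≥0∞) := by
      apply setLIntegral_congr_fun measurableSet_Ici
      intro θ hθ
      have : {b | θ * (MB / M) < ψ b} = ∅ := by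
        ext b
        simp only [mem_setOf_eq, mem_empty_iff_false, iff_false, not_lt]
        calc ψ b ≤ MB := hψle b
          _ = M * (MB / M) := by field_simp
          _ ≤ θ * (MB / M) := mul_le_mul_of_nonneg_right hθ (div_pos hMB hMpos).le
      rw [hVψ]; simp only [this, measure_empty]
    rw [this, lintegral_zero, add_zero]
  -- the main chain
  have main : ENNReal.ofReal ((1 - lam) * (M / MA) * Iφ + lam * (M / MB) * Iψ)
      ≤ ENNReal.ofReal Iχ := by
    calc ENNReal.ofReal ((1 - lam) * (M / MA) * Iφ + lam * (M / MB) * Iψ)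
        = ENNReal.ofReal (1 - lam) * (ENNReal.ofReal (M / MA) * ENNReal.ofReal Iφ)
          + ENNReal.ofReal lam * (ENNReal.ofReal (M / MB) * ENNReal.ofReal Iψ) := by
          rw [ENNReal.ofReal_add (by positivity) (by positivity),
            ENNReal.ofReal_mul (by positivity), ENNReal.ofReal_mul hl1'.le,
            ENNReal.ofReal_mul (by positivity), ENNReal.ofReal_mul hl0.le]
          ring
      _ = ∫⁻ θ in Ioo (0:ℝ) M,
            (ENNReal.ofReal (1 - lam) * Vφ θ + ENNReal.ofReal lam * Vψ θ) := by
          rw [lintegral_add_left ((hVφ_anti.measurable).const_mul _),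
            lintegral_const_mul _ hVφ_anti.measurable,
            lintegral_const_mul _ hVψ_anti.measurable,
            ← hsplitφ, ← hsplitψ, lcφ, lcψ]
      _ ≤ ∫⁻ θ in Ioo (0:ℝ) M, Vχ θ :=
          setLIntegral_mono hVχ_anti.measurable hpt
      _ ≤ ∫⁻ θ in Ioi (0:ℝ), Vχ θ := lintegral_mono_set Ioo_subset_Ioi_self
      _ = ENNReal.ofReal Iχ := lcχ.symm
  have mainR : (1 - lam) * (M / MA) * Iφ + lam * (M / MB) * Iψ ≤ Iχ :=
    (ENNReal.ofReal_le_ofReal_iff hIχ0).mp main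
  -- AM-GM finish
  have am := Real.geom_mean_le_arith_mean2_weighted hl1'.le hl0.le
    (div_nonneg hIφ0 hMA.le) (div_nonneg hIψ0 hMB.le) (by ring)
  have hMA' : MA ^ (1 - lam) ≠ 0 := (Real.rpow_pos_of_pos hMA _).ne'
  have hMB' : MB ^ lam ≠ 0 := (Real.rpow_pos_of_pos hMB _).ne'
  have e1 : M * ((Iφ / MA) ^ (1 - lam) * (Iψ / MB) ^ lam) = Iφ ^ (1 - lam) * Iψ ^ lam := by
    rw [hM, Real.div_rpow hIφ0 hMA.le, Real.div_rpow hIψ0 hMB.le]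
    field_simp
  calc Iφ ^ (1 - lam) * Iψ ^ lam
      = M * ((Iφ / MA) ^ (1 - lam) * (Iψ / MB) ^ lam) := e1.symm
    _ ≤ M * ((1 - lam) * (Iφ / MA) + lam * (Iψ / MB)) :=
        mul_le_mul_of_nonneg_left am hMpos.le
    _ = (1 - lam) * (M / MA) * Iφ + lam * (M / MB) * Iψ := by field_simp
    _ ≤ Iχ := mainR


/-! ### slice helper lemmas for compact sets -/

lemma slc_subset_ball (n : ℕ) {S : Set (Fin (n + 1) → ℝ)} {R : ℝ}
    (hR : S ⊆ Metric.closedBall 0 R) (s : ℝ) :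
    slc n S s ⊆ Metric.closedBall 0 R := by
  intro z hz
  have h1 : (Fin.snoc z s : Fin (n+1) → ℝ) ∈ Metric.closedBall 0 R := hR hz
  simp only [Metric.mem_closedBall, dist_zero_right] at h1 ⊢
  have habs : ∀ i : Fin n, |z i| ≤ R := by
    intro i
    calc |z i| = |(Fin.snoc z s : Fin (n+1) → ℝ) i.castSucc| := by rw [Fin.snoc_castSucc]
      _ ≤ ‖(Fin.snoc z s : Fin (n+1) → ℝ)‖ := by
          simpa [Real.norm_eq_abs] using norm_le_pi_norm (Fin.snoc z s : Fin (n+1) → ℝ) i.castSucc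
      _ ≤ R := h1
  rcases isEmpty_or_nonempty (Fin n) with h | h
  · have hz0 : z = 0 := Subsingleton.elim z 0
    have : (0:ℝ) ≤ R := le_trans (norm_nonneg _) h1
    simpa [hz0] using this
  · exact (pi_norm_le_iff_of_nonempty (f := z) (r := R)).2 (fun i => by
      simpa [Real.norm_eq_abs] using habs i)

lemma slc_empty_of_big (n : ℕ) {S : Set (Fin (n + 1) → ℝ)} {R : ℝ}
    (hR : S ⊆ Metric.closedBall 0 R) {s : ℝ} (hs : R < |s|) :
    slc n S s = ∅ := by
  ext z
  simp only [slc, mem_setOf_eq, mem_empty_iff_false, iff_false]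
  intro hz
  have h1 : (Fin.snoc z s : Fin (n+1) → ℝ) ∈ Metric.closedBall 0 R := hR hz
  simp only [Metric.mem_closedBall, dist_zero_right] at h1
  have : |s| ≤ R := by
    calc |s| = |(Fin.snoc z s : Fin (n+1) → ℝ) (Fin.last n)| := by rw [Fin.snoc_last]
      _ ≤ ‖(Fin.snoc z s : Fin (n+1) → ℝ)‖ := by
          simpa [Real.norm_eq_abs] using norm_le_pi_norm (Fin.snoc z s : Fin (n+1) → ℝ) (Fin.last n)
      _ ≤ R := h1
  linarith

lemma slc_sum_combo (n : ℕ) (S T : Set (Fin (n + 1) → ℝ)) (a b x y : ℝ) :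
    a • slc n S x + b • slc n T y ⊆ slc n (a • S + b • T) (a * x + b * y) := by
  intro z hz
  obtain ⟨u', hu', v', hv', rfl⟩ := hz
  obtain ⟨u, hu, rfl⟩ := hu'
  obtain ⟨v, hv, rfl⟩ := hv'
  have key : (Fin.snoc (a • u + b • v) (a * x + b * y) : Fin (n+1) → ℝ)
      = a • (Fin.snoc u x : Fin (n+1) → ℝ) + b • (Fin.snoc v y : Fin (n+1) → ℝ) := by
    funext j
    refine Fin.lastCases ?_ (fun i => ?_) j <;>
      simp [Fin.snoc_last, Fin.snoc_castSucc, smul_eq_mul]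
  show (Fin.snoc (a • u + b • v) (a * x + b * y) : Fin (n+1) → ℝ) ∈ a • S + b • T
  rw [key]
  exact Set.add_mem_add (Set.smul_mem_smul_set hu) (Set.smul_mem_smul_set hv)

lemma slc_combo_subset (n : ℕ) {S : Set (Fin (n + 1) → ℝ)} (hS : Convex ℝ S)
    {a b : ℝ} (ha : 0 ≤ a) (hb : 0 ≤ b) (hab : a + b = 1) (x y : ℝ) :
    a • slc n S x + b • slc n S y ⊆ slc n S (a * x + b * y) := by
  refine (slc_sum_combo n S S a b x y).trans ?_
  have h1 : a • S + b • S = S := by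
    rw [← Convex.add_smul hS ha hb, hab, one_smul]
  intro z hz
  simp only [slc, mem_setOf_eq] at hz ⊢
  rwa [h1] at hz

lemma slc_nonempty_of_vol_pos (n : ℕ) {S : Set (Fin (n + 1) → ℝ)} {s : ℝ}
    (h : (volume (slc n S s)).toReal ≠ 0) : (slc n S s).Nonempty := by
  rcases eq_empty_or_nonempty (slc n S s) with h' | h'
  · exfalso; apply h; rw [h']; simp
  · exact h'

/-- The slice-volume profile of a compact set, as a real function. -/
def prof (n : ℕ) (S : Set (Fin (n + 1) → ℝ)) : ℝ → ℝ :=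
  fun s => (volume (slc n S s)).toReal

lemma prof_meas (n : ℕ) {S : Set (Fin (n + 1) → ℝ)} (hS : MeasurableSet S) :
    Measurable (prof n S) :=
  (measurable_vol_slc n S hS).ennreal_toReal

lemma prof_nonneg (n : ℕ) (S : Set (Fin (n + 1) → ℝ)) (s : ℝ) : 0 ≤ prof n S s :=
  ENNReal.toReal_nonneg

lemma prof_integral (n : ℕ) {S : Set (Fin (n + 1) → ℝ)} (hSc : IsCompact S) :
    ∫ s, prof n S s = (volume S).toReal := by
  rw [vol_eq_lintegral_slc n S hSc.measurableSet,
    ← integral_toReal (measurable_vol_slc n S hSc.measurableSet).aemeasurable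
      (ae_of_all _ (fun s => (slc_compact n hSc s).measure_lt_top))]
  rfl

lemma prof_le (n : ℕ) {S : Set (Fin (n + 1) → ℝ)} {R : ℝ}
    (hR : S ⊆ Metric.closedBall 0 R) (s : ℝ) :
    prof n S s ≤ (volume (Metric.closedBall (0 : Fin n → ℝ) R)).toReal := by
  apply ENNReal.toReal_mono
  · exact (isCompact_closedBall _ _).measure_lt_top.ne
  · exact measure_mono (slc_subset_ball n hR s)

lemma prof_zero_of_big (n : ℕ) {S : Set (Fin (n + 1) → ℝ)} {R : ℝ}
    (hR : S ⊆ Metric.closedBall 0 R) {s : ℝ} (hs : R < |s|) : prof n S s = 0 := by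
  rw [prof, slc_empty_of_big n hR hs]; simp

lemma prof_integrable (n : ℕ) {S : Set (Fin (n + 1) → ℝ)} (hSc : IsCompact S) :
    Integrable (prof n S) := by
  obtain ⟨R, hR⟩ := hSc.isBounded.subset_closedBall 0
  set CB := (volume (Metric.closedBall (0 : Fin n → ℝ) R)).toReal with hCB
  have hCB0 : 0 ≤ CB := ENNReal.toReal_nonneg
  apply Integrable.mono' (g := (Icc (-R) R).indicator (fun _ => CB))
  · rw [integrable_indicator_iff measurableSet_Icc]
    exact integrableOn_const (by rw [Real.volume_Icc]; exact ENNReal.ofReal_ne_top)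
  · exact (prof_meas n hSc.measurableSet).aestronglyMeasurable
  · apply ae_of_all
    intro s
    rw [Real.norm_eq_abs, abs_of_nonneg (prof_nonneg n S s)]
    by_cases hs : s ∈ Icc (-R) R
    · rw [indicator_of_mem hs]
      exact prof_le n hR s
    · rw [indicator_of_notMem hs]
      have : R < |s| := by
        simp only [mem_Icc, not_and_or, not_le] at hs
        rcases le_or_gt 0 R with hR0 | hR0
        · rcases hs with h | h
          · calc R < -s := by linarith
              _ ≤ |s| := neg_le_abs s
          · exact lt_of_lt_of_le h (le_abs_self s)
        · exact lt_of_lt_of_le hR0 (abs_nonneg s)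
      rw [prof_zero_of_big n hR this]

/-! ### multiplicative Brunn–Minkowski for compact convex sets -/

theorem mulBM (n : ℕ) : ∀ (A B : Set (Fin n → ℝ)), A.Nonempty → B.Nonempty →
    IsCompact A → IsCompact B → Convex ℝ A → Convex ℝ B →
    ∀ lam : ℝ, 0 < lam → lam < 1 →
    ENNReal.ofReal ((volume A).toReal ^ (1 - lam) * (volume B).toReal ^ lam)
      ≤ volume ((1 - lam) • A + lam • B) := by
  induction n with
  | zero =>
    intro A B hAne hBne _ _ _ _ lam hl0 hl1
    have huniv : ∀ (U : Set (Fin 0 → ℝ)), U.Nonempty → U = univ := by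
      intro U hU
      obtain ⟨u, hu⟩ := hU
      apply eq_univ_of_forall
      intro x
      have : x = u := funext (fun i => i.elim0)
      rwa [this]
    have hvol : (volume : Measure (Fin 0 → ℝ)) univ = 1 := by
      rw [show (volume : Measure (Fin 0 → ℝ)) = Measure.pi (fun _ => volume) from rfl,
        Measure.pi_univ]
      simp
    rw [huniv A hAne, huniv B hBne]
    have h2 : ((1 - lam) • (univ : Set (Fin 0 → ℝ)) + lam • univ) = univ :=
      huniv _ ((univ_nonempty.smul_set).add (univ_nonempty.smul_set))
    rw [h2, hvol]
    simp
  | succ n ih =>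
    intro A B hAne hBne hAc hBc hAv hBv lam hl0 hl1
    have hl1' : 0 < 1 - lam := by linarith
    set C : Set (Fin (n+1) → ℝ) := (1 - lam) • A + lam • B with hC
    have hCne : C.Nonempty := (hAne.smul_set).add (hBne.smul_set)
    have hCc : IsCompact C := by
      apply IsCompact.add
      · rw [← Set.image_smul]; exact hAc.image (continuous_const_smul _)
      · rw [← Set.image_smul]; exact hBc.image (continuous_const_smul _)
    have hCfin : volume C ≠ ⊤ := hCc.measure_lt_top.ne
    by_cases hA0 : volume A = 0
    · rw [hA0]
      simp [Real.zero_rpow hl1'.ne']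
    by_cases hB0 : volume B = 0
    · rw [hB0]
      simp [Real.zero_rpow hl0.ne']
    -- profiles
    set φ := prof n A with hφ
    set ψ := prof n B with hψ
    set χ := prof n C with hχ
    have hφm : Measurable φ := prof_meas n hAc.measurableSet
    have hψm : Measurable ψ := prof_meas n hBc.measurableSet
    have hχm : Measurable χ := prof_meas n hCc.measurableSet
    have hIφ : ∫ s, φ s = (volume A).toReal := prof_integral n hAc
    have hIψ : ∫ s, ψ s = (volume B).toReal := prof_integral n hBc
    have hIχ : ∫ s, χ s = (volume C).toReal := prof_integral n hCc
    obtain ⟨RA, hRA⟩ := hAc.isBounded.subset_closedBall 0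
    obtain ⟨RB, hRB⟩ := hBc.isBounded.subset_closedBall 0
    -- sups
    have hrangeφ : BddAbove (Set.range φ) :=
      ⟨(volume (Metric.closedBall (0 : Fin n → ℝ) RA)).toReal, by
        rintro x ⟨s, rfl⟩; exact prof_le n hRA s⟩
    have hrangeψ : BddAbove (Set.range ψ) :=
      ⟨(volume (Metric.closedBall (0 : Fin n → ℝ) RB)).toReal, by
        rintro x ⟨s, rfl⟩; exact prof_le n hRB s⟩
    set MA := sSup (Set.range φ) with hMA
    set MB := sSup (Set.range ψ) with hMB
    have hφle : ∀ s, φ s ≤ MA := fun s => le_csSup hrangeφ (mem_range_self s)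
    have hψle : ∀ s, ψ s ≤ MB := fun s => le_csSup hrangeψ (mem_range_self s)
    have hφsup : ∀ u, u < MA → ∃ a, u < φ a := by
      intro u hu
      obtain ⟨_, ⟨a, rfl⟩, h⟩ := exists_lt_of_lt_csSup (Set.range_nonempty φ) hu
      exact ⟨a, h⟩
    have hψsup : ∀ u, u < MB → ∃ b, u < ψ b := by
      intro u hu
      obtain ⟨_, ⟨b, rfl⟩, h⟩ := exists_lt_of_lt_csSup (Set.range_nonempty ψ) hu
      exact ⟨b, h⟩
    have hMA0 : 0 < MA := by
      by_contra h
      push_neg at h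
      have hzero : ∀ s, φ s = 0 := fun s => le_antisymm ((hφle s).trans h) (prof_nonneg n A s)
      have : (volume A).toReal = 0 := by
        rw [← hIφ]
        simp [hzero]
      exact hA0 (by
        rwa [ENNReal.toReal_eq_zero_iff, or_iff_left hAc.measure_lt_top.ne] at this)
    have hMB0 : 0 < MB := by
      by_contra h
      push_neg at h
      have hzero : ∀ s, ψ s = 0 := fun s => le_antisymm ((hψle s).trans h) (prof_nonneg n B s)
      have : (volume B).toReal = 0 := by
        rw [← hIψ]
        simp [hzero]
      exact hB0 (by
        rwa [ENNReal.toReal_eq_zero_iff, or_iff_left hBc.measure_lt_top.ne] at this)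
    -- generic quasiconcavity via the inductive hypothesis
    have quasi : ∀ (S : Set (Fin (n+1) → ℝ)), IsCompact S → Convex ℝ S →
        ∀ u : ℝ, 0 < u → Convex ℝ {s : ℝ | u < prof n S s} := by
      intro S hSc hSv u hu x hx y hy a b ha hb hab
      rcases eq_or_lt_of_le ha with ha0 | ha0
      · have hb1 : b = 1 := by linarith
        rw [← ha0, hb1]
        simpa using hy
      rcases eq_or_lt_of_le hb with hb0 | hb0
      · have ha1 : a = 1 := by linarith
        rw [← hb0, ha1]
        simpa using hx
      have hx' : u < prof n S x := hx
      have hy' : u < prof n S y := hy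
      have ha_eq : a = 1 - b := by linarith
      subst ha_eq
      have hxne : (slc n S x).Nonempty := slc_nonempty_of_vol_pos n (hu.trans hx').ne'
      have hyne : (slc n S y).Nonempty := slc_nonempty_of_vol_pos n (hu.trans hy').ne'
      have hb1 : b < 1 := by linarith
      have hIH := ih (slc n S x) (slc n S y) hxne hyne
        (slc_compact n hSc x) (slc_compact n hSc y)
        (slc_convex n hSv x) (slc_convex n hSv y) b hb0 hb1
      have hsub : (1 - b) • slc n S x + b • slc n S y ⊆ slc n S ((1 - b) * x + b * y) :=
        slc_combo_subset n hSv ha hb hab x y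
      have hvol : ENNReal.ofReal ((volume (slc n S x)).toReal ^ (1 - b)
            * (volume (slc n S y)).toReal ^ b) ≤ volume (slc n S ((1 - b) * x + b * y)) :=
        le_trans hIH (measure_mono hsub)
      have hfin : volume (slc n S ((1 - b) * x + b * y)) ≠ ⊤ :=
        (slc_compact n hSc _).measure_lt_top.ne
      have hstep : (volume (slc n S x)).toReal ^ (1 - b) * (volume (slc n S y)).toReal ^ b
          ≤ prof n S ((1 - b) * x + b * y) := by
        rw [prof, ← ENNReal.ofReal_le_iff_le_toReal hfin]
        exact hvol
      have hgt : u < (volume (slc n S x)).toReal ^ (1 - b) * (volume (slc n S y)).toReal ^ b := by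
        have h1 : u ^ (1 - b) * u ^ b = u := by
          rw [← Real.rpow_add hu]; simp
        calc u = u ^ (1 - b) * u ^ b := h1.symm
          _ < (volume (slc n S x)).toReal ^ (1 - b) * (volume (slc n S y)).toReal ^ b := by
              apply mul_lt_mul'' (Real.rpow_lt_rpow hu.le hx' (by linarith))
                (Real.rpow_lt_rpow hu.le hy' hb0)
                (Real.rpow_nonneg hu.le _) (Real.rpow_nonneg hu.le _)
      show u < prof n S ((1 - b) • x + b • y)
      simp only [smul_eq_mul]
      exact lt_of_lt_of_le hgt hstep
    -- boundedness of superlevel sets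
    have hbdd : ∀ (S : Set (Fin (n+1) → ℝ)) (R : ℝ), S ⊆ Metric.closedBall 0 R →
        ∀ u : ℝ, 0 < u → IsBounded {s : ℝ | u < prof n S s} := by
      intro S R hRS u hu
      apply (Metric.isBounded_Icc (-R) R).subset
      intro s hs
      rcases le_or_gt (|s|) R with h | h
      · exact ⟨neg_le_of_abs_le h, le_of_abs_le h⟩
      · exfalso
        have h0 : prof n S s = 0 := prof_zero_of_big n hRS h
        have h1 : u < prof n S s := hs
        rw [h0] at h1
        linarith
    -- the key hypothesis
    have hkey : ∀ a b, 0 < φ a → 0 < ψ b →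
        (φ a) ^ (1 - lam) * (ψ b) ^ lam ≤ χ ((1 - lam) * a + lam * b) := by
      intro a b hφa hψb
      have hane : (slc n A a).Nonempty := slc_nonempty_of_vol_pos n (ne_of_gt hφa)
      have hbne : (slc n B b).Nonempty := slc_nonempty_of_vol_pos n (ne_of_gt hψb)
      have hIH := ih (slc n A a) (slc n B b) hane hbne
        (slc_compact n hAc a) (slc_compact n hBc b)
        (slc_convex n hAv a) (slc_convex n hBv b) lam hl0 hl1
      have hsub := slc_sum_combo n A B (1 - lam) lam a b
      have hfin : volume (slc n C ((1 - lam) * a + lam * b)) ≠ ⊤ :=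
        (slc_compact n hCc _).measure_lt_top.ne
      rw [show χ ((1-lam)*a+lam*b) = (volume (slc n C ((1-lam)*a+lam*b))).toReal from rfl,
        ← ENNReal.ofReal_le_iff_le_toReal hfin]
      exact le_trans hIH (measure_mono hsub)
    -- apply the 1-D lemma
    have main := oneDim_PL lam hl0 hl1 φ ψ χ hφm hψm hχm
      (prof_nonneg n A) (prof_nonneg n B) (prof_nonneg n C)
      (prof_integrable n hAc) (prof_integrable n hBc) (prof_integrable n hCc)
      MA MB hMA0 hMB0 hφle hψle
      (fun u _ hu => hφsup u hu) (fun u _ hu => hψsup u hu)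
      (fun u hu => quasi A hAc hAv u hu) (fun u hu => quasi B hBc hBv u hu)
      (fun u hu => hbdd A RA hRA u hu) (fun u hu => hbdd B RB hRB u hu)
      hkey
    rw [hIφ, hIψ, hIχ] at main
    calc ENNReal.ofReal ((volume A).toReal ^ (1 - lam) * (volume B).toReal ^ lam)
        ≤ ENNReal.ofReal ((volume C).toReal) := ENNReal.ofReal_le_ofReal main
      _ = volume C := ENNReal.ofReal_toReal hCfin

/-! ### additive Brunn–Minkowski -/

lemma smul_set_add_dist {E : Type*} [AddCommMonoid E] [Module ℝ E] (c : ℝ) (A B : Set E) :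
    c • (A + B) = c • A + c • B := by
  ext x
  constructor
  · rintro ⟨y, ⟨u, hu, v, hv, rfl⟩, rfl⟩
    exact ⟨c • u, Set.smul_mem_smul_set hu, c • v, Set.smul_mem_smul_set hv, (smul_add c u v).symm⟩
  · rintro ⟨y, ⟨u, hu, rfl⟩, z, ⟨v, hv, rfl⟩, rfl⟩
    exact ⟨u + v, ⟨u, hu, v, hv, rfl⟩, smul_add c u v⟩

lemma smul_set_assoc {E : Type*} [AddCommMonoid E] [Module ℝ E] (c d : ℝ) (A : Set E) :
    c • (d • A) = (c * d) • A := by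
  rw [← Set.image_smul, ← Set.image_smul, ← Set.image_smul, Set.image_image]
  apply Set.image_congr
  intro a _
  rw [smul_smul]

lemma vol_smul_set (n : ℕ) (c : ℝ) (A : Set (Fin n → ℝ)) :
    volume (c • A) = ENNReal.ofReal (|c| ^ n) * volume A := by
  rw [Measure.addHaar_smul volume c A, abs_pow, Module.finrank_fin_fun ℝ]

lemma vol_vadd (n : ℕ) (v : Fin n → ℝ) (S : Set (Fin n → ℝ)) :
    volume (v +ᵥ S) = volume S := by
  have h : v +ᵥ S = (fun x => -v + x) ⁻¹' S := by
    ext x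
    constructor
    · rintro ⟨y, hy, rfl⟩
      simpa [vadd_eq_add] using hy
    · intro hx
      exact ⟨-v + x, hx, by simp [vadd_eq_add]⟩
  rw [h, measure_preimage_add]

theorem addBM (n : ℕ) (A B : Set (Fin n → ℝ)) (hAne : A.Nonempty) (hBne : B.Nonempty)
    (hAc : IsCompact A) (hBc : IsCompact B) (hAv : Convex ℝ A) (hBv : Convex ℝ B)
    (lam : ℝ) (hl0 : 0 ≤ lam) (hl1 : lam ≤ 1) (α β : ℝ) (hα : 0 ≤ α) (hβ : 0 ≤ β)
    (hA : ENNReal.ofReal (α ^ n) ≤ volume A) (hB : ENNReal.ofReal (β ^ n) ≤ volume B) :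
    ENNReal.ofReal (((1 - lam) * α + lam * β) ^ n) ≤ volume ((1 - lam) • A + lam • B) := by
  rcases eq_or_lt_of_le hl0 with h0 | h0
  · -- lam = 0
    rw [← h0]
    have : (1 - 0 : ℝ) • A + (0:ℝ) • B = A := by
      rw [Set.zero_smul_set hBne, sub_zero, one_smul]
      simp
    rw [this]
    simpa using hA
  rcases eq_or_lt_of_le hl1 with h1 | h1
  · -- lam = 1
    rw [h1]
    have : (1 - 1 : ℝ) • A + (1:ℝ) • B = B := by
      rw [sub_self, Set.zero_smul_set hAne, one_smul]
      rw [add_comm]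
      simp
    rw [this]
    simpa using hB
  have hl1' : 0 < 1 - lam := by linarith
  rcases eq_or_lt_of_le hα with hα0 | hα0
  · -- α = 0
    obtain ⟨a₀, ha₀⟩ := hAne
    have hsub : ((1 - lam) • a₀) +ᵥ (lam • B) ⊆ (1 - lam) • A + lam • B := by
      intro x hx
      obtain ⟨y, hy, rfl⟩ := hx
      exact Set.add_mem_add (Set.smul_mem_smul_set ha₀) hy
    calc ENNReal.ofReal (((1 - lam) * α + lam * β) ^ n)
        = ENNReal.ofReal (lam ^ n * β ^ n) := by
          rw [← hα0]
          congr 1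
          rw [show (1 - lam) * 0 + lam * β = lam * β by ring, mul_pow]
      _ = ENNReal.ofReal (lam ^ n) * ENNReal.ofReal (β ^ n) := by
          rw [ENNReal.ofReal_mul (by positivity)]
      _ ≤ ENNReal.ofReal (lam ^ n) * volume B := by
          exact mul_le_mul_right hB _
      _ = volume (lam • B) := by
          rw [vol_smul_set, abs_of_pos h0]
      _ = volume (((1 - lam) • a₀) +ᵥ (lam • B)) := (vol_vadd _ _ _).symm
      _ ≤ volume ((1 - lam) • A + lam • B) := measure_mono hsub
  rcases eq_or_lt_of_le hβ with hβ0 | hβ0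
  · -- β = 0
    obtain ⟨b₀, hb₀⟩ := hBne
    have hsub : (lam • b₀) +ᵥ ((1 - lam) • A) ⊆ (1 - lam) • A + lam • B := by
      intro x hx
      obtain ⟨y, hy, rfl⟩ := hx
      have : (fun z => lam • b₀ +ᵥ z) y = y + lam • b₀ := by
        simp [vadd_eq_add]; abel
      rw [this]
      exact Set.add_mem_add hy (Set.smul_mem_smul_set hb₀)
    calc ENNReal.ofReal (((1 - lam) * α + lam * β) ^ n)
        = ENNReal.ofReal ((1 - lam) ^ n * α ^ n) := by
          rw [← hβ0]
          congr 1
          rw [show (1 - lam) * α + lam * 0 = (1 - lam) * α by ring, mul_pow]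
      _ = ENNReal.ofReal ((1 - lam) ^ n) * ENNReal.ofReal (α ^ n) := by
          rw [ENNReal.ofReal_mul (by positivity)]
      _ ≤ ENNReal.ofReal ((1 - lam) ^ n) * volume A := mul_le_mul_right hA _
      _ = volume ((1 - lam) • A) := by
          rw [vol_smul_set, abs_of_pos hl1']
      _ = volume ((lam • b₀) +ᵥ ((1 - lam) • A)) := (vol_vadd _ _ _).symm
      _ ≤ volume ((1 - lam) • A + lam • B) := measure_mono hsub
  -- main case
  set γ : ℝ := (1 - lam) * α + lam * β with hγ
  have hγ0 : 0 < γ := by positivity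
  set lam' : ℝ := lam * β / γ with hlam'
  have hlam'0 : 0 < lam' := by positivity
  have hlam'1 : lam' < 1 := by
    rw [hlam', div_lt_one hγ0, hγ]
    nlinarith
  have h1lam' : 1 - lam' = (1 - lam) * α / γ := by
    rw [hlam', hγ]
    field_simp
    ring
  set A' : Set (Fin n → ℝ) := α⁻¹ • A with hA'
  set B' : Set (Fin n → ℝ) := β⁻¹ • B with hB'
  have hA'ne : A'.Nonempty := hAne.smul_set
  have hB'ne : B'.Nonempty := hBne.smul_set
  have hA'c : IsCompact A' := by
    rw [hA', ← Set.image_smul]; exact hAc.image (continuous_const_smul _)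
  have hB'c : IsCompact B' := by
    rw [hB', ← Set.image_smul]; exact hBc.image (continuous_const_smul _)
  have hA'v : Convex ℝ A' := hAv.smul _
  have hB'v : Convex ℝ B' := hBv.smul _
  have hA'vol : (1:ℝ≥0∞) ≤ volume A' := by
    rw [hA', vol_smul_set, abs_of_pos (by positivity : (0:ℝ) < α⁻¹)]
    calc (1:ℝ≥0∞) = ENNReal.ofReal ((α⁻¹) ^ n) * ENNReal.ofReal (α ^ n) := by
          rw [← ENNReal.ofReal_mul (by positivity), ← mul_pow]
          rw [inv_mul_cancel₀ hα0.ne']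
          simp
      _ ≤ ENNReal.ofReal ((α⁻¹) ^ n) * volume A := mul_le_mul_right hA _
  have hB'vol : (1:ℝ≥0∞) ≤ volume B' := by
    rw [hB', vol_smul_set, abs_of_pos (by positivity : (0:ℝ) < β⁻¹)]
    calc (1:ℝ≥0∞) = ENNReal.ofReal ((β⁻¹) ^ n) * ENNReal.ofReal (β ^ n) := by
          rw [← ENNReal.ofReal_mul (by positivity), ← mul_pow]
          rw [inv_mul_cancel₀ hβ0.ne']
          simp
      _ ≤ ENNReal.ofReal ((β⁻¹) ^ n) * volume B := mul_le_mul_right hB _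
  have hmul := mulBM n A' B' hA'ne hB'ne hA'c hB'c hA'v hB'v lam' hlam'0 hlam'1
  have hD1 : (1:ℝ≥0∞) ≤ volume ((1 - lam') • A' + lam' • B') := by
    refine le_trans ?_ hmul
    have h1 : (1:ℝ) ≤ (volume A').toReal := by
      rw [← ENNReal.toReal_one]
      exact ENNReal.toReal_mono hA'c.measure_lt_top.ne hA'vol
    have h2 : (1:ℝ) ≤ (volume B').toReal := by
      rw [← ENNReal.toReal_one]
      exact ENNReal.toReal_mono hB'c.measure_lt_top.ne hB'vol
    have : (1:ℝ) ≤ (volume A').toReal ^ (1 - lam') * (volume B').toReal ^ lam' := by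
      calc (1:ℝ) = 1 * 1 := (one_mul 1).symm
        _ ≤ (volume A').toReal ^ (1 - lam') * (volume B').toReal ^ lam' := by
            apply mul_le_mul (Real.one_le_rpow h1 (by linarith))
              (Real.one_le_rpow h2 hlam'0.le) zero_le_one
              (Real.rpow_nonneg (by linarith) _)
    calc (1:ℝ≥0∞) = ENNReal.ofReal 1 := by simp
      _ ≤ ENNReal.ofReal ((volume A').toReal ^ (1 - lam') * (volume B').toReal ^ lam') :=
          ENNReal.ofReal_le_ofReal this
  have hseteq : (1 - lam) • A + lam • B = γ • ((1 - lam') • A' + lam' • B') := by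
    rw [smul_set_add_dist, hA', hB', smul_set_assoc, smul_set_assoc,
      smul_set_assoc, smul_set_assoc]
    congr 2
    · rw [h1lam']
      field_simp
    · rw [hlam']
      field_simp
  rw [hseteq, vol_smul_set, abs_of_pos hγ0]
  calc ENNReal.ofReal (γ ^ n) = ENNReal.ofReal (γ ^ n) * 1 := (mul_one _).symm
    _ ≤ ENNReal.ofReal (γ ^ n) * volume ((1 - lam') • A' + lam' • B') :=
        mul_le_mul_right hD1 _

/-! ### the mountain integral -/

lemma antiD (m : ℕ) {d : ℝ} (hd : d ≠ 0) (u v : ℝ) :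
    ∫ s in u..v, (1 - s/d)^(m+1-1) = (d/(m+1)) * ((1-u/d)^(m+1) - (1-v/d)^(m+1)) := by
  have hm1 : ((m:ℝ)+1) ≠ 0 := by positivity
  have hderiv : ∀ x ∈ Set.uIcc u v, HasDerivAt (fun s => -(d/((m:ℝ)+1)) * (1-s/d)^(m+1))
      ((1-x/d)^(m+1-1)) x := by
    intro x _
    have h1 : HasDerivAt (fun s : ℝ => 1 - s/d) (-(1/d)) x := by
      simpa using ((hasDerivAt_id x).div_const d).const_sub 1
    have h2 := h1.pow (m+1)
    have h3 := h2.const_mul (-(d/((m:ℝ)+1)))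
    refine h3.congr_deriv ?_
    have : (m + 1 - 1 : ℕ) = m := rfl
    rw [this]
    push_cast
    field_simp
  rw [intervalIntegral.integral_eq_sub_of_hasDerivAt hderiv (by
    apply Continuous.intervalIntegrable
    continuity)]
  ring

lemma vol_add_singleton (n : ℕ) (A : Set (Fin n → ℝ)) (p : Fin n → ℝ) :
    volume (A + ({p} : Set (Fin n → ℝ))) = volume A := by
  have h : A + ({p} : Set (Fin n → ℝ)) = p +ᵥ A := by
    ext x
    constructor
    · rintro ⟨u, hu, v, hv, rfl⟩
      rw [mem_singleton_iff] at hv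
      exact ⟨u, hu, by show p + u = u + v; rw [hv, add_comm]⟩
    · rintro ⟨u, hu, rfl⟩
      exact ⟨u, hu, p, mem_singleton_iff.2 rfl, by show u + p = p + u; rw [add_comm]⟩
  rw [h, vol_vadd]


set_option maxHeartbeats 1000000 in
/-- The volume of `K` below level `t` dominates that of a unit mountain:
for `t ∈ [0, d]`, `∫_0^t L_K(s) ds ≥ 1 - (1 - t/d)^d` (here `d = m + 1`). -/
theorem stmt8 (m : ℕ) (hm : 1 ≤ m) (F : Set (Fin m → ℝ))
    (hFcomp : IsCompact F) (hFconv : Convex ℝ F) (hFvol : volume F = 1)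
    (K : Set (Fin (m + 1) → ℝ)) (hKcomp : IsCompact K) (hKconv : Convex ℝ K)
    (hKfloor : HasFloor m F K) (hKvol : volume K = 1)
    (t : ℝ) (ht : t ∈ Set.Icc (0 : ℝ) ((m : ℝ) + 1)) :
    1 - (1 - t / ((m : ℝ) + 1)) ^ (m + 1) ≤ ∫ s in (0 : ℝ)..t, layerVol m K s := by
  have hm0 : m ≠ 0 := by omega
  have hdne : ((m:ℝ)+1) ≠ 0 := by positivity
  set L : ℝ → ℝ := layerVol m K with hLdef
  have hLprof : L = prof m K := rfl
  have hKne : K.Nonempty := by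
    rcases eq_empty_or_nonempty K with h | h
    · exfalso; rw [h] at hKvol; simp at hKvol
    · exact h
  have hFne : F.Nonempty := by
    rcases eq_empty_or_nonempty F with h | h
    · exfalso; rw [h] at hFvol; simp at hFvol
    · exact h
  have hfloor_sub : floorEmb m F ⊆ K := by
    rw [← hKfloor.2]; exact inter_subset_left
  have hslc0 : slc m K 0 = F := by
    ext z
    simp only [slc, mem_setOf_eq]
    constructor
    · intro hz
      have h2 : (Fin.snoc z 0 : Fin (m+1) → ℝ) ∈ floorEmb m F := by
        rw [← hKfloor.2]
        exact ⟨hz, by simp [Fin.snoc_last]⟩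
      obtain ⟨w, hw, hweq⟩ := h2
      have hwz : w = z := by
        have := congrArg Fin.init hweq
        rwa [Fin.init_snoc, Fin.init_snoc] at this
      rwa [← hwz]
    · intro hz
      exact hfloor_sub ⟨z, hz, rfl⟩
  have hL0 : L 0 = 1 := by
    rw [hLprof, show prof m K 0 = (volume (slc m K 0)).toReal from rfl, hslc0, hFvol]
    simp
  -- negative and large heights give empty slices
  have hneg : ∀ s : ℝ, s < 0 → slc m K s = ∅ := by
    intro s hs
    ext z
    simp only [slc, mem_setOf_eq, mem_empty_iff_false, iff_false]
    intro hz
    have h2 := hKfloor.1 hz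
    simp only [mem_setOf_eq, Fin.snoc_last] at h2
    linarith
  obtain ⟨xtop, hxtopK, hxtop'⟩ := hKcomp.exists_isMaxOn hKne (continuous_apply (Fin.last m)).continuousOn
  have hxtop : ∀ x ∈ K, x (Fin.last m) ≤ xtop (Fin.last m) := fun x hx => hxtop' hx
  set hh : ℝ := xtop (Fin.last m) with hhdef
  have hh0 : 0 ≤ hh := hKfloor.1 hxtopK
  have hbig : ∀ s : ℝ, hh < s → slc m K s = ∅ := by
    intro s hs
    ext z
    simp only [slc, mem_setOf_eq, mem_empty_iff_false, iff_false]
    intro hz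
    have h2 := hxtop _ hz
    rw [Fin.snoc_last] at h2
    linarith
  have hLnn : ∀ s, 0 ≤ L s := fun s => prof_nonneg m K s
  have hLzero : ∀ s : ℝ, s ∉ Icc 0 hh → L s = 0 := by
    intro s hs
    simp only [mem_Icc, not_and_or, not_le] at hs
    rw [hLprof, prof]
    rcases hs with h | h
    · rw [hneg s h]; simp
    · rw [hbig s h]; simp
  -- nonempty slices in [0, hh]
  have hne_slc : ∀ s ∈ Icc (0:ℝ) hh, (slc m K s).Nonempty := by
    intro s hs
    obtain ⟨f₀, hf₀⟩ := hFne
    have hf₀K : (Fin.snoc f₀ 0 : Fin (m+1) → ℝ) ∈ K := hfloor_sub ⟨f₀, hf₀, rfl⟩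
    rcases eq_or_lt_of_le hh0 with hh0' | hh0'
    · have hs0 : s = 0 := le_antisymm (hs.2.trans hh0'.symm.le) hs.1
      rw [hs0, hslc0]
      exact ⟨f₀, hf₀⟩
    · set y : Fin (m+1) → ℝ :=
        (1 - s/hh) • (Fin.snoc f₀ 0 : Fin (m+1) → ℝ) + (s/hh) • xtop with hy
      have hyK : y ∈ K := by
        apply hKconv hf₀K hxtopK
        · have : s / hh ≤ 1 := div_le_one_of_le₀ hs.2 hh0'.le
          linarith
        · exact div_nonneg hs.1 hh0'.le
        · ring
      have hylast : y (Fin.last m) = s := by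
        rw [hy]
        simp only [Pi.add_apply, Pi.smul_apply, smul_eq_mul, Fin.snoc_last]
        field_simp
        rw [← hhdef]; ring
      refine ⟨Fin.init y, ?_⟩
      show Fin.snoc (Fin.init y) s ∈ K
      rw [← hylast, Fin.snoc_init_self]
      exact hyK
  have hLint : Integrable L := by rw [hLprof]; exact prof_integrable m hKcomp
  have htot : ∫ s, L s = 1 := by
    rw [hLprof, prof_integral m hKcomp, hKvol]
    simp
  have hgcont : Continuous (fun s : ℝ => (1 - s/((m:ℝ)+1))^(m+1-1)) :=
    (continuous_const.sub (continuous_id.div_const _)).pow _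
  have h0t : ∫ s in (0:ℝ)..t, (1 - s/((m:ℝ)+1))^(m+1-1)
      = 1 - (1 - t/((m:ℝ)+1))^(m+1) := by
    rw [antiD m hdne 0 t]
    rw [div_self hdne]
    simp
  -- total interval integral
  have hione : ∫ s in (0:ℝ)..hh, L s = 1 := by
    rw [intervalIntegral.integral_of_le hh0, ← MeasureTheory.integral_Icc_eq_integral_Ioc,
      ← htot]
    have hind : (Icc (0:ℝ) hh).indicator L = L := by
      funext s
      by_cases hs : s ∈ Icc (0:ℝ) hh
      · simp [indicator_of_mem hs]
      · simp [indicator_of_notMem hs, hLzero s hs]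
    rw [← integral_indicator measurableSet_Icc, hind]
  rcases le_or_gt hh t with hcase | hcase
  · -- easy case: t above the top of K
    have h2 : ∫ s in hh..t, L s = 0 := by
      rw [intervalIntegral.integral_of_le hcase]
      have : EqOn L (fun _ => (0:ℝ)) (Ioc hh t) := by
        intro s hs
        exact hLzero s (by simp only [mem_Icc, not_and_or, not_le]; right; exact hs.1)
      rw [setIntegral_congr_fun measurableSet_Ioc this]
      simp
    have h3 : ∫ s in (0:ℝ)..t, L s = 1 := by
      rw [← intervalIntegral.integral_add_adjacent_intervals
        hLint.intervalIntegrable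
        hLint.intervalIntegrable, hione, h2, add_zero]
    rw [h3]
    have : 0 ≤ (1 - t/((m:ℝ)+1))^(m+1) := by
      apply pow_nonneg
      have := ht.2
      have h4 : t/((m:ℝ)+1) ≤ 1 := div_le_one_of_le₀ this (by positivity)
      linarith
    linarith
  · -- main case: t < hh
    have hhpos : 0 < hh := lt_of_le_of_lt ht.1 hcase
    -- step 1: hh ≤ m + 1 via the cone bound
    have hhled : hh ≤ (m:ℝ)+1 := by
      obtain ⟨zh, hzh⟩ := hne_slc hh ⟨hh0, le_refl hh⟩
      have hcone : ∀ s ∈ Ioc (0:ℝ) hh, ENNReal.ofReal ((1 - s/hh)^m) ≤ volume (slc m K s) := by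
        intro s hs
        have hs1 : s / hh ≤ 1 := div_le_one_of_le₀ hs.2 hh0
        have harg : (1 - s/hh) * 0 + (s/hh) * hh = s := by field_simp; ring
        have h1 : (1 - s/hh) • slc m K 0 + (s/hh) • slc m K hh
            ⊆ slc m K ((1 - s/hh) * 0 + (s/hh) * hh) :=
          slc_combo_subset m hKconv (a := 1 - s/hh) (b := s/hh) (by linarith)
            (div_nonneg hs.1.le hh0) (by ring) 0 hh
        rw [harg] at h1
        have h2 : (1 - s/hh) • F + ({(s/hh) • zh} : Set (Fin m → ℝ)) ⊆ slc m K s := by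
          refine subset_trans ?_ h1
          rw [hslc0]
          apply Set.add_subset_add_left
          rw [Set.singleton_subset_iff]
          exact Set.smul_mem_smul_set hzh
        calc ENNReal.ofReal ((1 - s/hh)^m)
            = volume ((1 - s/hh) • F + ({(s/hh) • zh} : Set (Fin m → ℝ))) := by
              rw [vol_add_singleton, vol_smul_set, hFvol, mul_one,
                abs_of_nonneg (by linarith : (0:ℝ) ≤ 1 - s/hh)]
          _ ≤ volume (slc m K s) := measure_mono h2
      have hcone_int : ENNReal.ofReal (hh/((m:ℝ)+1)) ≤ 1 := by
        have hgint : IntegrableOn (fun s => (1 - s/hh)^(m+1-1)) (Ioc (0:ℝ) hh) :=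
          ((continuous_const.sub (continuous_id.div_const _)).pow _).integrableOn_Ioc
        have e0 : ∫ s in Ioc (0:ℝ) hh, (1 - s/hh)^(m+1-1) = hh/((m:ℝ)+1) := by
          rw [← intervalIntegral.integral_of_le hh0, antiD m (ne_of_gt hhpos) 0 hh,
            div_self (ne_of_gt hhpos)]
          simp
        calc ENNReal.ofReal (hh/((m:ℝ)+1))
            = ∫⁻ s in Ioc (0:ℝ) hh, ENNReal.ofReal ((1 - s/hh)^(m+1-1)) := by
              rw [← e0]
              apply ofReal_integral_eq_lintegral_ofReal hgint
              filter_upwards [ae_restrict_mem measurableSet_Ioc] with s hs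
              have : s/hh ≤ 1 := div_le_one_of_le₀ hs.2 hh0
              exact pow_nonneg (by linarith) _
          _ ≤ ∫⁻ s in Ioc (0:ℝ) hh, volume (slc m K s) := by
              apply setLIntegral_mono (measurable_vol_slc m K hKcomp.measurableSet)
              intro s hs
              exact hcone s hs
          _ ≤ ∫⁻ s, volume (slc m K s) := lintegral_mono' Measure.restrict_le_self le_rfl
          _ = volume K := (vol_eq_lintegral_slc m K hKcomp.measurableSet).symm
          _ = 1 := hKvol
      have := ENNReal.ofReal_le_one.mp hcone_int
      rw [div_le_one (by positivity)] at this
      exact this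
    -- step 2: concavity of the profile root
    set fval : ℝ → ℝ := fun s => (L s) ^ ((m:ℝ))⁻¹ with hfval
    have hfnn : ∀ s, 0 ≤ fval s := fun s => Real.rpow_nonneg (hLnn s) _
    have hconc : ∀ c s : ℝ, 0 < c → c < s → s ≤ hh →
        (1 - c/s) + (c/s) * fval s ≤ fval c := by
      intro c s hc hcs hsh
      have hs0 : 0 < s := hc.trans hcs
      have hμ1 : c/s ≤ 1 := by
        rw [div_le_one hs0]; exact hcs.le
      have hμ0 : 0 ≤ c/s := div_nonneg hc.le hs0.le
      have hsliceA : slc m K 0 = F := hslc0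
      have hBineq : ENNReal.ofReal ((fval s)^m) ≤ volume (slc m K s) := by
        rw [hfval]
        rw [Real.rpow_inv_natCast_pow (hLnn s) hm0]
        exact ENNReal.ofReal_toReal_le
      have hAineq : ENNReal.ofReal ((1:ℝ)^m) ≤ volume (slc m K 0) := by
        rw [hslc0, hFvol, one_pow, ENNReal.ofReal_one]
      have habm := addBM m (slc m K 0) (slc m K s)
        (by rw [hslc0]; exact hFne) (hne_slc s ⟨hs0.le, hsh⟩)
        (slc_compact m hKcomp 0) (slc_compact m hKcomp s)
        (slc_convex m hKconv 0) (slc_convex m hKconv s)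
        (c/s) hμ0 hμ1 1 (fval s) zero_le_one (hfnn s) hAineq hBineq
      have harg : (1 - c/s) * 0 + (c/s) * s = c := by field_simp; ring
      have hsub : (1 - c/s) • slc m K 0 + (c/s) • slc m K s ⊆ slc m K c := by
        have h1 : (1 - c/s) • slc m K 0 + (c/s) • slc m K s
            ⊆ slc m K ((1 - c/s) * 0 + (c/s) * s) :=
          slc_combo_subset m hKconv (a := 1 - c/s) (b := c/s) (by linarith) hμ0 (by ring) 0 s
        rwa [harg] at h1
      have hfin : volume (slc m K c) ≠ ⊤ := (slc_compact m hKcomp c).measure_lt_top.ne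
      have hvolc : ENNReal.ofReal (((1 - c/s) * 1 + (c/s) * fval s)^m) ≤ volume (slc m K c) :=
        le_trans habm (measure_mono hsub)
      have hw0 : 0 ≤ (1 - c/s) * 1 + (c/s) * fval s := by
        have := hfnn s
        nlinarith
      have hLc : ((1 - c/s) * 1 + (c/s) * fval s)^m ≤ L c := by
        rw [hLprof, prof, ← ENNReal.ofReal_le_iff_le_toReal hfin]
        exact hvolc
      have := Real.rpow_le_rpow (pow_nonneg hw0 m) hLc (by positivity : (0:ℝ) ≤ ((m:ℝ))⁻¹)
      rwa [Real.pow_rpow_inv_natCast hw0 hm0, mul_one] at this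
    -- step 3: the crossing argument
    by_contra hcon
    push_neg at hcon
    have hcmp : ¬ (∀ s ∈ Icc (0:ℝ) t, (1 - s/((m:ℝ)+1))^(m+1-1) ≤ L s) := by
      intro hall
      have := intervalIntegral.integral_mono_on ht.1
        (hgcont.intervalIntegrable _ _) hLint.intervalIntegrable hall
      rw [h0t] at this
      rw [hLdef] at hcon
      linarith
    push_neg at hcmp
    obtain ⟨c, hcmem, hcgt⟩ := hcmp
    have hc0 : 0 < c := by
      rcases eq_or_lt_of_le hcmem.1 with h | h
      · exfalso
        rw [← h, hL0] at hcgt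
        simp at hcgt
      · exact h
    have hctd : c ≤ (m:ℝ)+1 := hcmem.2.trans ht.2
    have hkey : ∀ s ∈ Icc t hh, L s ≤ (1 - s/((m:ℝ)+1))^(m+1-1) := by
      intro s hs
      rcases eq_or_lt_of_le (hcmem.2.trans hs.1 : c ≤ s) with hceq | hclt
      · rw [← hceq]; exact hcgt.le
      · have hsh : s ≤ hh := hs.2
        have h1 : (1 - c/s) + (c/s) * fval s ≤ fval c := hconc c s hc0 hclt hsh
        have hcd1 : 0 ≤ 1 - c/((m:ℝ)+1) := by
          have : c/((m:ℝ)+1) ≤ 1 := div_le_one_of_le₀ hctd (by positivity)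
          linarith
        have hfc : fval c < 1 - c/((m:ℝ)+1) := by
          have h2 : fval c < ((1 - c/((m:ℝ)+1))^(m+1-1)) ^ ((m:ℝ))⁻¹ := by
            rw [hfval]
            exact Real.rpow_lt_rpow (hLnn c) hcgt (by positivity)
          rwa [show (m+1-1 : ℕ) = m from rfl, Real.pow_rpow_inv_natCast hcd1 hm0] at h2
        have hs0 : 0 < s := hc0.trans hclt
        have h3 : (c/s) * fval s < c/s - c/((m:ℝ)+1) := by linarith
        have hfs : fval s < 1 - s/((m:ℝ)+1) := by
          calc fval s = (s/c) * ((c/s) * fval s) := by field_simp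
            _ < (s/c) * (c/s - c/((m:ℝ)+1)) :=
                mul_lt_mul_of_pos_left h3 (div_pos hs0 hc0)
            _ = 1 - s/((m:ℝ)+1) := by field_simp
        have hLs : L s = (fval s)^m := by
          rw [hfval, Real.rpow_inv_natCast_pow (hLnn s) hm0]
        rw [hLs, show (m+1-1 : ℕ) = m from rfl]
        exact pow_le_pow_left₀ (hfnn s) hfs.le m
    -- contradiction via integrals
    have iL1 : ∫ s in (0:ℝ)..hh, L s
        = (∫ s in (0:ℝ)..t, L s) + ∫ s in t..hh, L s :=
      (intervalIntegral.integral_add_adjacent_intervals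
        hLint.intervalIntegrable
        hLint.intervalIntegrable).symm
    have hth : ∫ s in t..hh, L s ≤ ∫ s in t..hh, (1 - s/((m:ℝ)+1))^(m+1-1) :=
      intervalIntegral.integral_mono_on hcase.le hLint.intervalIntegrable
        (hgcont.intervalIntegrable _ _) hkey
    have hgd : ∫ s in (0:ℝ)..((m:ℝ)+1), (1 - s/((m:ℝ)+1))^(m+1-1) = 1 := by
      rw [antiD m hdne 0 ((m:ℝ)+1), div_self hdne]
      simp
    have hsplit2 : ∫ s in (0:ℝ)..((m:ℝ)+1), (1 - s/((m:ℝ)+1))^(m+1-1)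
        = (∫ s in (0:ℝ)..t, (1 - s/((m:ℝ)+1))^(m+1-1))
          + ∫ s in t..((m:ℝ)+1), (1 - s/((m:ℝ)+1))^(m+1-1) :=
      (intervalIntegral.integral_add_adjacent_intervals
        (hgcont.intervalIntegrable _ _) (hgcont.intervalIntegrable _ _)).symm
    have hsplit3 : ∫ s in t..((m:ℝ)+1), (1 - s/((m:ℝ)+1))^(m+1-1)
        = (∫ s in t..hh, (1 - s/((m:ℝ)+1))^(m+1-1))
          + ∫ s in hh..((m:ℝ)+1), (1 - s/((m:ℝ)+1))^(m+1-1) :=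
      (intervalIntegral.integral_add_adjacent_intervals
        (hgcont.intervalIntegrable _ _) (hgcont.intervalIntegrable _ _)).symm
    have hpos : 0 ≤ ∫ s in hh..((m:ℝ)+1), (1 - s/((m:ℝ)+1))^(m+1-1) := by
      apply intervalIntegral.integral_nonneg hhled
      intro u hu
      have : u/((m:ℝ)+1) ≤ 1 := div_le_one_of_le₀ hu.2 (by positivity)
      exact pow_nonneg (by linarith) _
    rw [hLdef] at hcon
    linarith [hione, iL1, hth, hgd, hsplit2, hsplit3, hpos, h0t, hcon]

end
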